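/- Let n ≥ 1, let E_{ij} denote the n×n matrix unit, and define Ê_{ij} = E_{ii} if i = j and Ê_{ij} = (E_{ij} + E_{ji})/√2 if i < j, indexed by pairs in S = {(i,j) : 1 ≤ i ≤ j ≤ n}. Then for any α = (i,j) and β = (k,l) in S, Σ_{γ∈S} ⟨[Ê_α, Ê_γ], [Ê_β, Ê_γ]⟩ = n δ_{αβ} − δ_α δ_β, where δ_{αβ} = δ_{ik}δ_{jl}, δ_α = δ_{ij}, δ_β = δ_{kl}. -/

import Mathlib

open Matrix BigOperators

/-- The commutator of two matrices. -/
def mcomm {n : ℕ} (A B : Matrix (Fin n) (Fin n) ℝ) : Matrix (Fin n) (Fin n) ℝ :=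
  A * B - B * A

/-- The standard orthonormal basis element `Ê_{ij}` of the space of symmetric matrices:
`Ê_{ii} = E_{ii}` and `Ê_{ij} = (E_{ij} + E_{ji})/√2` for `i ≠ j`. -/
noncomputable def Ehat {n : ℕ} (i j : Fin n) : Matrix (Fin n) (Fin n) ℝ :=
  if i = j then Matrix.single i i (1 : ℝ)
  else (1 / Real.sqrt 2) •
    (Matrix.single i j (1 : ℝ) + Matrix.single j i (1 : ℝ))

variable {n : ℕ}

lemma E_mul_M_mul_E (M : Matrix (Fin n) (Fin n) ℝ) (i j k l : Fin n) :
    Matrix.single i j (1:ℝ) * M * Matrix.single k l 1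
      = M j k • Matrix.single i l 1 := by
  ext a b
  simp [Matrix.mul_apply, Matrix.single, ite_and, Finset.sum_ite_eq,
    Finset.mul_sum, mul_ite, mul_comm]
  split_ifs <;> simp

lemma stdBasis_transpose (i j : Fin n) (c : ℝ) :
    (Matrix.single i j c)ᵀ = Matrix.single j i c := by
  ext a b
  simp [Matrix.single, and_comm]

lemma stdBasis_trace (i j : Fin n) (c : ℝ) :
    Matrix.trace (Matrix.single i j c) = if i = j then c else 0 := by
  simp [Matrix.trace, Matrix.diag, Matrix.single, ite_and, Finset.sum_ite_eq]
  split_ifs with h1 h2 h2 <;> simp_all [eq_comm]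

lemma ehat_symm (i j : Fin n) : Ehat i j = Ehat j i := by
  unfold Ehat
  rcases eq_or_ne i j with h | h
  · simp [h]
  · simp [h, h.symm, add_comm]

lemma ehat_transpose (i j : Fin n) : (Ehat i j)ᵀ = Ehat i j := by
  unfold Ehat
  rcases eq_or_ne i j with h | h
  · simp [h, stdBasis_transpose]
  · simp [h, Matrix.transpose_add, stdBasis_transpose, add_comm]

lemma trace_ehat (i j : Fin n) : Matrix.trace (Ehat i j) = if i = j then 1 else 0 := by
  unfold Ehat
  rcases eq_or_ne i j with h | h
  · simp [h, stdBasis_trace]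
  · simp [h, stdBasis_trace, h.symm]

lemma sqrt_half : (1 / Real.sqrt 2) * (1 / Real.sqrt 2) = 1/2 := by
  rw [div_mul_div_comm, one_mul, Real.mul_self_sqrt] <;> norm_num

lemma ehat_sandwich (M : Matrix (Fin n) (Fin n) ℝ) (p q : Fin n) :
    Ehat p q * M * Ehat p q =
      (1/2:ℝ) • (M q p • Matrix.single p q 1 + M q q • Matrix.single p p 1
        + M p p • Matrix.single q q 1 + M p q • Matrix.single q p 1)
      + (if p = q then -(M p p • Matrix.single p p (1:ℝ)) else 0) := by
  rcases eq_or_ne p q with h | h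
  · subst h
    rw [if_pos rfl]
    unfold Ehat
    rw [if_pos rfl, E_mul_M_mul_E]
    module
  · rw [if_neg h]
    unfold Ehat
    rw [if_neg h, Matrix.smul_mul, Matrix.smul_mul, Matrix.mul_smul, smul_smul, sqrt_half]
    simp only [add_mul, mul_add, E_mul_M_mul_E]
    module

variable {n : ℕ}

lemma filter_le_sum {α : Type*} [AddCommMonoid α] (f : Fin n → Fin n → α)
    (hf : ∀ p q, f p q = f q p) :
    (∑ pq ∈ Finset.univ.filter (fun pq : Fin n × Fin n => pq.1 ≤ pq.2), f pq.1 pq.2)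
      + ∑ pq ∈ Finset.univ.filter (fun pq : Fin n × Fin n => pq.1 ≤ pq.2), f pq.1 pq.2
      = (∑ p, ∑ q, f p q) + ∑ p, f p p := by
  rw [Finset.sum_filter, Fintype.sum_prod_type]
  have h2 : ∑ p, ∑ q, (if p ≤ q then f p q else 0) = ∑ p, ∑ q, (if q ≤ p then f p q else 0) := by
    rw [Finset.sum_comm]
    exact Finset.sum_congr rfl fun p _ => Finset.sum_congr rfl fun q _ => by rw [hf]
  nth_rewrite 2 [h2]
  rw [← Finset.sum_add_distrib, ← Finset.sum_add_distrib]
  refine Finset.sum_congr rfl fun p _ => ?_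
  rw [← Finset.sum_add_distrib]
  have : f p p = ∑ q, (if p = q then f p q else 0) := by
    rw [Finset.sum_ite_eq]; simp
  rw [this, ← Finset.sum_add_distrib]
  refine Finset.sum_congr rfl fun q _ => ?_
  rcases lt_trichotomy p q with h | h | h
  · simp [h.le, not_le.mpr h, h.ne]
  · subst h; simp
  · simp [not_le.mpr h, h.le, h.ne']

lemma sum_Mqp (M : Matrix (Fin n) (Fin n) ℝ) :
    ∑ p, ∑ q, (M q p • Matrix.single p q (1:ℝ)) = Mᵀ := by
  ext a b
  simp [Matrix.sum_apply, Matrix.single, ite_and, mul_ite, mul_one, mul_zero,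
    Finset.sum_ite_eq]

lemma sum_Mqq (M : Matrix (Fin n) (Fin n) ℝ) :
    ∑ p, ∑ q, (M q q • Matrix.single p p (1:ℝ)) = Matrix.trace M • (1 : Matrix (Fin n) (Fin n) ℝ) := by
  ext a b
  simp [Matrix.sum_apply, Matrix.single, ite_and, mul_ite, mul_one, mul_zero,
    Finset.sum_ite_eq, Matrix.trace, Matrix.diag, Matrix.one_apply]

lemma sum_Mpp (M : Matrix (Fin n) (Fin n) ℝ) :
    ∑ p, ∑ q, (M p p • Matrix.single q q (1:ℝ))
      = Matrix.trace M • (1 : Matrix (Fin n) (Fin n) ℝ) := by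
  rw [Finset.sum_comm]; exact sum_Mqq M

lemma sum_Mpq (M : Matrix (Fin n) (Fin n) ℝ) :
    ∑ p, ∑ q, (M p q • Matrix.single q p (1:ℝ)) = Mᵀ := by
  rw [Finset.sum_comm]; exact sum_Mqp M

lemma sum_diag_one :
    ∑ p : Fin n, Matrix.single p p (1:ℝ) = (1 : Matrix (Fin n) (Fin n) ℝ) := by
  ext a b
  simp [Matrix.sum_apply, Matrix.single, Matrix.one_apply, ite_and, Finset.sum_ite_eq]

lemma ehat_sandwich_sum (M : Matrix (Fin n) (Fin n) ℝ) :
    ∑ pq ∈ Finset.univ.filter (fun pq : Fin n × Fin n => pq.1 ≤ pq.2),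
      Ehat pq.1 pq.2 * M * Ehat pq.1 pq.2
      = (1/2 : ℝ) • (Mᵀ + Matrix.trace M • 1) := by
  have hf : ∀ p q : Fin n, Ehat p q * M * Ehat p q = Ehat q p * M * Ehat q p := by
    intro p q; rw [ehat_symm]
  have hsum := filter_le_sum (fun p q => Ehat p q * M * Ehat p q) hf
  have hdiag : ∀ p : Fin n, Ehat p p * M * Ehat p p = M p p • Matrix.single p p 1 := by
    intro p; unfold Ehat; rw [if_pos rfl, E_mul_M_mul_E]
  have full : (∑ p : Fin n, ∑ q : Fin n, Ehat p q * M * Ehat p q)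
      = Mᵀ + Matrix.trace M • 1 - ∑ p : Fin n, M p p • Matrix.single p p (1:ℝ) := by
    simp only [ehat_sandwich, Finset.sum_add_distrib, ← Finset.smul_sum,
      Finset.sum_ite_eq, Finset.mem_univ, if_true, Finset.sum_neg_distrib]
    rw [sum_Mpq, sum_diag_one]
    have h5 : Matrix.trace M = ∑ x, M x x := by simp [Matrix.trace, Matrix.diag]
    rw [← Finset.sum_smul, ← h5, sum_Mqp, sum_Mqq]
    module
  rw [full] at hsum
  have h2 : (∑ pq ∈ Finset.univ.filter (fun pq : Fin n × Fin n => pq.1 ≤ pq.2),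
        Ehat pq.1 pq.2 * M * Ehat pq.1 pq.2)
      + (∑ pq ∈ Finset.univ.filter (fun pq : Fin n × Fin n => pq.1 ≤ pq.2),
        Ehat pq.1 pq.2 * M * Ehat pq.1 pq.2) = Mᵀ + Matrix.trace M • 1 := by
    rw [hsum, Finset.sum_congr rfl (fun p _ => hdiag p)]
    abel
  calc (∑ pq ∈ Finset.univ.filter (fun pq : Fin n × Fin n => pq.1 ≤ pq.2),
        Ehat pq.1 pq.2 * M * Ehat pq.1 pq.2)
      = (1/2 : ℝ) • ((∑ pq ∈ Finset.univ.filter (fun pq : Fin n × Fin n => pq.1 ≤ pq.2),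
          Ehat pq.1 pq.2 * M * Ehat pq.1 pq.2)
        + (∑ pq ∈ Finset.univ.filter (fun pq : Fin n × Fin n => pq.1 ≤ pq.2),
          Ehat pq.1 pq.2 * M * Ehat pq.1 pq.2)) := by
        rw [← two_smul ℝ, smul_smul]; norm_num
    _ = (1/2 : ℝ) • (Mᵀ + Matrix.trace M • 1) := by rw [h2]

lemma trace_EE (a b c d : Fin n) :
    Matrix.trace (Matrix.single a b (1:ℝ) * Matrix.single c d 1)
      = if b = c ∧ a = d then 1 else 0 := by
  rcases eq_or_ne b c with h | h
  · subst h
    rw [Matrix.single_mul_single_same, stdBasis_trace]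
    simp [eq_comm]
  · rw [Matrix.single_mul_single_of_ne (h := h), Matrix.trace_zero, if_neg]
    tauto

lemma trace_ehat_mul (i j k l : Fin n) (hij : i ≤ j) (hkl : k ≤ l) :
    Matrix.trace (Ehat i j * Ehat k l) = if i = k ∧ j = l then 1 else 0 := by
  unfold Ehat
  rcases eq_or_ne i j with hij' | hij' <;> rcases eq_or_ne k l with hkl' | hkl'
  · subst hij'; subst hkl'
    rw [if_pos rfl, if_pos rfl, trace_EE]
  · subst hij'
    rw [if_pos rfl, if_neg hkl', Matrix.mul_smul, Matrix.trace_smul, mul_add,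
      Matrix.trace_add, trace_EE, trace_EE]
    have h1 : ¬(i = k ∧ i = l) := fun ⟨h1, h2⟩ => hkl' (h1 ▸ h2 ▸ rfl)
    have h2 : ¬(i = l ∧ i = k) := fun ⟨h1, h2⟩ => hkl' (h2 ▸ h1 ▸ rfl)
    rw [if_neg h1, if_neg h2]
    simp
  · subst hkl'
    rw [if_neg hij', if_pos rfl, Matrix.smul_mul, Matrix.trace_smul, add_mul,
      Matrix.trace_add, trace_EE, trace_EE]
    have h1 : ¬(j = k ∧ i = k) := fun ⟨h1, h2⟩ => hij' (h2 ▸ h1 ▸ rfl)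
    have h2 : ¬(i = k ∧ j = k) := fun ⟨h1, h2⟩ => hij' (h1 ▸ h2 ▸ rfl)
    rw [if_neg h1, if_neg h2]
    simp
  · rw [if_neg hij', if_neg hkl', Matrix.smul_mul, Matrix.mul_smul, smul_smul, sqrt_half,
      Matrix.trace_smul, add_mul, mul_add, mul_add, Matrix.trace_add, Matrix.trace_add,
      Matrix.trace_add, trace_EE, trace_EE, trace_EE, trace_EE]
    have hlt : i < j := lt_of_le_of_ne hij hij'
    have hlt' : k < l := lt_of_le_of_ne hkl hkl'
    have h1 : ¬(j = k ∧ i = l) := by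
      rintro ⟨rfl, rfl⟩
      exact absurd (hlt.trans hlt') (lt_irrefl _)
    have h2 : ¬(i = l ∧ j = k) := fun ⟨ha, hb⟩ => h1 ⟨hb, ha⟩
    rw [if_neg h1, if_neg h2]
    by_cases h : i = k ∧ j = l
    · rw [if_pos h, if_pos (⟨h.2, h.1⟩ : j = l ∧ i = k)]; norm_num
    · rw [if_neg h, if_neg (fun hh : j = l ∧ i = k => h ⟨hh.2, hh.1⟩)]; norm_num

lemma double_sum_trace (X Y : Matrix (Fin n) (Fin n) ℝ) :
    ∑ a, ∑ b, X a b * Y a b = Matrix.trace (X * Yᵀ) := by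
  simp [Matrix.trace, Matrix.diag, Matrix.mul_apply, Matrix.transpose_apply]


lemma key_expand (A B C : Matrix (Fin n) (Fin n) ℝ) (hB : Bᵀ = B) (hC : Cᵀ = C) :
    (∑ a, ∑ b, mcomm A C a b * mcomm B C a b)
    = Matrix.trace ((B*A) * (C*1*C)) - Matrix.trace (A * (C*B*C))
      - Matrix.trace (B * (C*A*C)) + Matrix.trace ((A*B) * (C*1*C)) := by
  rw [double_sum_trace]
  have hT : (mcomm B C)ᵀ = C*B - B*C := by
    unfold mcomm
    rw [Matrix.transpose_sub, Matrix.transpose_mul, Matrix.transpose_mul, hB, hC]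
  rw [hT]
  show Matrix.trace ((A*C - C*A) * (C*B - B*C)) = _
  rw [sub_mul, mul_sub, mul_sub, Matrix.trace_sub, Matrix.trace_sub, Matrix.trace_sub]
  have e1 : Matrix.trace ((A*C)*(C*B)) = Matrix.trace ((B*A)*(C*1*C)) := by
    rw [mul_one, ← mul_assoc, Matrix.trace_mul_comm]
    simp only [← mul_assoc]
  have e2 : Matrix.trace ((A*C)*(B*C)) = Matrix.trace (A*(C*B*C)) := by
    simp only [← mul_assoc]
  have e3 : Matrix.trace ((C*A)*(C*B)) = Matrix.trace (B*(C*A*C)) := by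
    rw [← mul_assoc, Matrix.trace_mul_comm]
  have e4 : Matrix.trace ((C*A)*(B*C)) = Matrix.trace ((A*B)*(C*1*C)) := by
    rw [mul_one]
    simp only [mul_assoc]
    rw [Matrix.trace_mul_comm]
    simp only [mul_assoc]
  rw [e1, e2, e3, e4]
  ring

/-- Formula (2.3): for `α = (i,j)`, `β = (k,l)` in `S = {(i,j) : i ≤ j}`,
`∑_{γ∈S} ⟨[Ê_α, Ê_γ], [Ê_β, Ê_γ]⟩ = n δ_{αβ} − δ_α δ_β`, where `δ_{αβ} = δ_{ik}δ_{jl}`,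
`δ_α = δ_{ij}`, `δ_β = δ_{kl}` and `⟨·,·⟩` is the standard inner product of matrices. -/
theorem commutator_inner_sum (n : ℕ) (hn : 1 ≤ n) (i j k l : Fin n)
    (hij : i ≤ j) (hkl : k ≤ l) :
    ∑ pq ∈ Finset.univ.filter (fun pq : Fin n × Fin n => pq.1 ≤ pq.2),
        (∑ a, ∑ b, mcomm (Ehat i j) (Ehat pq.1 pq.2) a b *
          mcomm (Ehat k l) (Ehat pq.1 pq.2) a b) =
      (n : ℝ) * (if i = k ∧ j = l then 1 else 0) -
        (if i = j then 1 else 0) * (if k = l then 1 else 0) := by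
  rw [Finset.sum_congr rfl (fun pq _ => key_expand (Ehat i j) (Ehat k l) (Ehat pq.1 pq.2)
    (ehat_transpose k l) (ehat_transpose pq.1 pq.2))]
  simp only [Finset.sum_sub_distrib, Finset.sum_add_distrib, ← Matrix.trace_sum,
    ← Finset.mul_sum]
  rw [ehat_sandwich_sum, ehat_sandwich_sum, ehat_sandwich_sum,
    ehat_transpose, ehat_transpose, Matrix.transpose_one, Matrix.trace_one]
  simp only [Matrix.mul_smul, Matrix.trace_smul, mul_add, Matrix.trace_add, mul_one,
    Matrix.mul_one, smul_eq_mul]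
  rw [Matrix.trace_mul_comm (Ehat k l) (Ehat i j), trace_ehat_mul i j k l hij hkl,
    trace_ehat, trace_ehat, Fintype.card_fin]
  push_cast
  ring
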